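/- Assume CH. Then every tall P-ideal on ℕ contains an increasing tower: there is an increasing tower all of whose members belong to the ideal. -/

import Mathlib

open Set

/-- `A ⊆* B`: `A` is almost contained in `B`, i.e. `A \ B` is finite. -/
def AlmostSubset (A B : Set ℕ) : Prop := (A \ B).Finite

/-- An ideal on ℕ: contains `∅`, does not contain `ℕ`, and is closed under subsets and
finite unions. -/
def IsIdealFam (I : Set (Set ℕ)) : Prop :=
  ∅ ∈ I ∧ (univ : Set ℕ) ∉ I ∧ (∀ A B : Set ℕ, B ∈ I → A ⊆ B → A ∈ I) ∧
    ∀ A B : Set ℕ, A ∈ I → B ∈ I → A ∪ B ∈ I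

/-- A P-ideal: an ideal in which every countable subfamily has a pseudounion belonging to
the ideal. -/
def IsPIdeal (I : Set (Set ℕ)) : Prop :=
  IsIdealFam I ∧ ∀ C : Set (Set ℕ), C.Countable → C ⊆ I →
    ∃ B ∈ I, ∀ A ∈ C, AlmostSubset A B

/-- A family of sets is tall if every infinite subset of ℕ has infinite intersection with
some member of the family. -/
def IsTallFam (I : Set (Set ℕ)) : Prop :=
  ∀ A : Set ℕ, A.Infinite → ∃ B ∈ I, (A ∩ B).Infinite

/-- A filter on ℕ: contains `ℕ`, does not contain `∅`, and is closed under finite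
intersections and supersets. -/
def IsFilterFam (F : Set (Set ℕ)) : Prop :=
  (univ : Set ℕ) ∈ F ∧ ∅ ∉ F ∧ (∀ A B : Set ℕ, A ∈ F → B ∈ F → A ∩ B ∈ F) ∧
    ∀ A B : Set ℕ, A ∈ F → A ⊆ B → B ∈ F

/-- A P-filter: a filter in which every countable subfamily has an infinite
pseudointersection belonging to the filter. -/
def IsPFilterFam (F : Set (Set ℕ)) : Prop :=
  IsFilterFam F ∧ ∀ C : Set (Set ℕ), C.Countable → C ⊆ F →
    ∃ X ∈ F, X.Infinite ∧ ∀ A ∈ C, AlmostSubset X A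

/-- A family of sets is nowhere dense (as a filter) if it has no infinite
pseudointersection. -/
def IsNwdFam (F : Set (Set ℕ)) : Prop :=
  ¬ ∃ X : Set ℕ, X.Infinite ∧ ∀ A ∈ F, AlmostSubset X A

/-- A (decreasing) tower: a `⊆*`-decreasing family of infinite subsets of ℕ indexed by an
ordinal `κ`, with no infinite pseudointersection. -/
def IsTower (κ : Ordinal) (A : Ordinal → Set ℕ) : Prop :=
  (∀ α < κ, (A α).Infinite) ∧
  (∀ α β : Ordinal, α < β → β < κ → AlmostSubset (A β) (A α)) ∧
  ¬ ∃ X : Set ℕ, X.Infinite ∧ ∀ α < κ, AlmostSubset X (A α)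

/-- An increasing tower: a `⊆*`-increasing family of infinite subsets of ℕ indexed by an
ordinal `κ` such that every infinite subset of ℕ has infinite intersection with some
member. -/
def IsIncTower (κ : Ordinal) (B : Ordinal → Set ℕ) : Prop :=
  (∀ α < κ, (B α).Infinite) ∧
  (∀ α β : Ordinal, α < β → β < κ → AlmostSubset (B α) (B β)) ∧
  ∀ X : Set ℕ, X.Infinite → ∃ γ < κ, (B γ ∩ X).Infinite

noncomputable section TallAux

open scoped Classical in
/-- Recursion functional: at stage `α`, pick (if possible) a set in `I` almost containing
all previous stages and meeting `g α` infinitely. -/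
def towerF (I : Set (Set ℕ)) (g : Ordinal → Set ℕ) :
    ∀ α : Ordinal, (∀ β, β < α → Set ℕ) → Set ℕ :=
  fun α prev =>
    if h : ∃ S, S ∈ I ∧ (g α ∩ S).Infinite ∧
        ∀ β (hβ : β < α), AlmostSubset (prev β hβ) S then h.choose else ∅

def towerB (I : Set (Set ℕ)) (g : Ordinal → Set ℕ) : Ordinal → Set ℕ :=
  Ordinal.lt_wf.fix (towerF I g)

lemma towerB_eq (I : Set (Set ℕ)) (g : Ordinal → Set ℕ) (α : Ordinal) :
    towerB I g α = towerF I g α (fun β _ => towerB I g β) :=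
  Ordinal.lt_wf.fix_eq _ _

lemma towerB_spec (I : Set (Set ℕ)) (hP : IsPIdeal I) (htall : IsTallFam I)
    (g : Ordinal → Set ℕ) (hg : ∀ α, (g α).Infinite) :
    ∀ α < (Cardinal.aleph 1).ord,
      towerB I g α ∈ I ∧ (g α ∩ towerB I g α).Infinite ∧
        ∀ β < α, AlmostSubset (towerB I g β) (towerB I g α) := by
  intro α
  induction α using Ordinal.induction with
  | h α IH =>
    intro hα
    have hex : ∃ S, S ∈ I ∧ (g α ∩ S).Infinite ∧
        ∀ β (hβ : β < α), AlmostSubset (towerB I g β) S := by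
      have hcst : (towerB I g '' Set.Iio α).Countable := by
        apply Set.Countable.image
        rw [Cardinal.countable_iff_lt_aleph_one, Ordinal.mk_Iio_ordinal]
        have h1 : α.card < Cardinal.aleph 1 := Cardinal.lt_ord.mp hα
        exact Cardinal.lift_lt_aleph_one.mpr h1
      have hsub : towerB I g '' Set.Iio α ⊆ I := by
        rintro _ ⟨β, hβ, rfl⟩
        exact (IH β hβ (hβ.trans hα)).1
      obtain ⟨B', hB'I, hB'⟩ := hP.2 _ hcst hsub
      obtain ⟨C', hC'I, hC'⟩ := htall (g α) (hg α)
      refine ⟨B' ∪ (g α ∩ C'), ?_, ?_, ?_⟩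
      · exact hP.1.2.2.2 _ _ hB'I (hP.1.2.2.1 _ _ hC'I Set.inter_subset_right)
      · exact hC'.mono (fun x hx => ⟨hx.1, Or.inr hx⟩)
      · intro β hβ
        have : towerB I g β \ (B' ∪ (g α ∩ C')) ⊆ towerB I g β \ B' :=
          Set.diff_subset_diff_right Set.subset_union_left
        exact (hB' _ ⟨β, hβ, rfl⟩).subset this
    have hBα : towerB I g α = hex.choose := by
      rw [towerB_eq, towerF, dif_pos hex]
    rw [hBα]
    obtain ⟨h1, h2, h3⟩ := hex.choose_spec
    exact ⟨h1, h2, fun β hβ => h3 β hβ⟩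

end TallAux

universe u v in
lemma ch_lift (h : (2 : Cardinal.{u}) ^ Cardinal.aleph0 = Cardinal.aleph 1) :
    (2 : Cardinal.{v}) ^ Cardinal.aleph0 = Cardinal.aleph 1 := by
  have h1 : (2 : Cardinal.{max u v}) ^ Cardinal.aleph0 = Cardinal.aleph 1 := by
    have h2 := congrArg Cardinal.lift.{v} h
    rwa [Cardinal.lift_power, Cardinal.lift_two, Cardinal.lift_aleph0,
      Cardinal.lift_aleph, Ordinal.lift_one] at h2
  apply Cardinal.lift_injective.{u}
  rwa [Cardinal.lift_power, Cardinal.lift_two, Cardinal.lift_aleph0,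
    Cardinal.lift_aleph, Ordinal.lift_one]

/-- Under CH, every tall P-ideal on ℕ contains an increasing tower. -/
theorem tall_Pideal_contains_incTower_of_CH
    (ch : (2 : Cardinal) ^ Cardinal.aleph0 = Cardinal.aleph 1)
    (I : Set (Set ℕ)) (hP : IsPIdeal I) (htall : IsTallFam I) :
    ∃ (κ : Ordinal) (B : Ordinal → Set ℕ), IsIncTower κ B ∧ ∀ α < κ, B α ∈ I := by
    classical
  set ω₁ := (Cardinal.aleph 1).ord with hω₁
  -- enumeration of Set ℕ by toType of ω₁
  have hset : Cardinal.mk (Set ℕ) = Cardinal.aleph 1 := by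
    rw [Cardinal.mk_set, Cardinal.mk_nat]; exact ch_lift ch
  have hT : Cardinal.lift.{0} (Cardinal.mk ω₁.ToType) = Cardinal.lift (Cardinal.mk (Set ℕ)) := by
    rw [Cardinal.lift_uzero, Cardinal.mk_toType, Cardinal.card_ord]
    exact Cardinal.aleph_one_eq_lift.mpr hset.symm
  obtain ⟨e⟩ := Cardinal.lift_mk_eq'.mp hT
  set iso := (Ordinal.ToType.mk (o := ω₁)) with hiso
  set g : Ordinal → Set ℕ := fun α =>
    if h : α < ω₁ then
      (if (e (iso ⟨α, h⟩)).Infinite then e (iso ⟨α, h⟩) else Set.univ)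
    else Set.univ with hg_def
  have hg : ∀ α, (g α).Infinite := by
    intro α
    by_cases h : α < ω₁
    · simp only [hg_def, dif_pos h]
      split
      · assumption
      · exact Set.infinite_univ
    · simp only [hg_def, dif_neg h]
      exact Set.infinite_univ
  have hsurj : ∀ X : Set ℕ, X.Infinite → ∃ γ < ω₁, g γ = X := by
    intro X hX
    refine ⟨(iso.symm (e.symm X)).1, (iso.symm (e.symm X)).2, ?_⟩
    have h2 : (iso.symm (e.symm X)).1 < ω₁ := (iso.symm (e.symm X)).2
    simp only [hg_def, dif_pos h2]
    have : iso ⟨(iso.symm (e.symm X)).1, h2⟩ = e.symm X := by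
      rw [show (⟨(iso.symm (e.symm X)).1, h2⟩ : Set.Iio ω₁) = iso.symm (e.symm X) from rfl]
      exact iso.apply_symm_apply _
    rw [this, e.apply_symm_apply, if_pos hX]
  have hspec := towerB_spec I hP htall g hg
  refine ⟨ω₁, towerB I g, ⟨?_, ?_, ?_⟩, fun α hα => (hspec α hα).1⟩
  · intro α hα
    exact ((hspec α hα).2.1).mono Set.inter_subset_right
  · intro α β hαβ hβ
    exact (hspec β hβ).2.2 α hαβ
  · intro X hX
    obtain ⟨γ, hγ, hgγ⟩ := hsurj X hX
    refine ⟨γ, hγ, ?_⟩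
    have := (hspec γ hγ).2.1
    rw [hgγ, Set.inter_comm] at this
    exact this
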